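/- Assume the realizable teacher setting (labels y_i = ⟨θ*, φ(x_i)⟩ for a fixed θ* ∈ ℝ^m) and 0 < ηλ < 1. Then for every initialization θ^{(0)} ∈ ℝ^m and every t ∈ ℕ, the gradient-descent iterates satisfy ‖θ^{(t)} − θ*‖₂ ≥ (1 − ηλ)^t·‖θ_⊥^{(0)}‖₂ − ‖θ*‖₂; consequently, whenever (1 − ηλ)^t·‖θ_⊥^{(0)}‖₂ ≥ ‖θ*‖₂, the population loss satisfies L(θ^{(t)}) ≥ λ_min(Σ)·((1 − ηλ)^t·‖θ_⊥^{(0)}‖₂ − ‖θ*‖₂)². -/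

import Mathlib

open MeasureTheory ProbabilityTheory Finset Filter
open scoped RealInnerProductSpace NNReal ENNReal

noncomputable section

/-- One gradient-descent step on the ridge objective `L_n(θ;λ)`:
`θ ↦ θ − η•∇L_n(θ;λ)`, where `∇L_n(θ;λ) = (1/n)∑ᵢ(⟨θ,φᵢ⟩−yᵢ)•φᵢ + λ•θ`. -/
def gdStep (m n : ℕ) (φ : Fin n → EuclideanSpace ℝ (Fin m)) (y : Fin n → ℝ)
    (η lam : ℝ) (θ : EuclideanSpace ℝ (Fin m)) : EuclideanSpace ℝ (Fin m) :=
  θ - η • ((n : ℝ)⁻¹ • ∑ i, (⟪θ, φ i⟫ - y i) • φ i + lam • θ)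

/-- Gradient-descent iterates `θ^{(t)}` started at `θ0`. -/
def gdIter (m n : ℕ) (φ : Fin n → EuclideanSpace ℝ (Fin m)) (y : Fin n → ℝ)
    (η lam : ℝ) (θ0 : EuclideanSpace ℝ (Fin m)) : ℕ → EuclideanSpace ℝ (Fin m)
  | 0 => θ0
  | t + 1 => gdStep m n φ y η lam (gdIter m n φ y η lam θ0 t)

/-- The unregularized training loss `L_n(θ) = (1/(2n)) ∑ᵢ (⟨θ,φᵢ⟩ − yᵢ)²`. -/
def trainLoss (m n : ℕ) (φ : Fin n → EuclideanSpace ℝ (Fin m)) (y : Fin n → ℝ)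
    (θ : EuclideanSpace ℝ (Fin m)) : ℝ :=
  (1 / (2 * n) : ℝ) * ∑ i, (⟪θ, φ i⟫ - y i) ^ 2

/-- The ridge objective `L_n(θ;λ) = L_n(θ) + (λ/2)‖θ‖²`. -/
def ridgeObj (m n : ℕ) (φ : Fin n → EuclideanSpace ℝ (Fin m)) (y : Fin n → ℝ)
    (lam : ℝ) (θ : EuclideanSpace ℝ (Fin m)) : ℝ :=
  trainLoss m n φ y θ + (lam / 2) * ‖θ‖ ^ 2

/-- The average squared feature norm `L = (1/n) ∑ᵢ ‖φᵢ‖²`. -/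
def featNormAvg (m n : ℕ) (φ : Fin n → EuclideanSpace ℝ (Fin m)) : ℝ :=
  (1 / n : ℝ) * ∑ i, ‖φ i‖ ^ 2

/-- The Gaussian measure `N(0, v·I_m)` on `ℝ^m` (`v` stands for the variance `ν²`),
realized as the product of `m` i.i.d. real Gaussians `N(0, v)`. -/
def stdGaussian (m : ℕ) (v : ℝ≥0) : Measure (EuclideanSpace ℝ (Fin m)) :=
  (Measure.pi fun _ : Fin m => gaussianReal 0 v).map
    (EuclideanSpace.equiv (Fin m) ℝ).symm

/-- The smallest strictly positive eigenvalue `λ_min⁺(Φ^⊤Φ)` of the Gram matrix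
`Φ^⊤Φ = ∑ᵢ φᵢφᵢ^⊤`, viewed as the operator `w ↦ ∑ᵢ ⟨w,φᵢ⟩•φᵢ` on `ℝ^m`. -/
def lamMinPosOf (m n : ℕ) (φ : Fin n → EuclideanSpace ℝ (Fin m)) : ℝ :=
  sInf {μ : ℝ | 0 < μ ∧ ∃ w : EuclideanSpace ℝ (Fin m), w ≠ 0 ∧
    ∑ i, ⟪w, φ i⟫ • φ i = μ • w}

/-- The population squared loss `L(θ) = E_{x∼D}[⟨θ − θ*, φ(x)⟩²]`. -/
def popLoss (d m : ℕ) (D : Measure (EuclideanSpace ℝ (Fin d)))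
    (φmap : EuclideanSpace ℝ (Fin d) → EuclideanSpace ℝ (Fin m))
    (θstar θ : EuclideanSpace ℝ (Fin m)) : ℝ :=
  ∫ x, (⟪θ - θstar, φmap x⟫) ^ 2 ∂D


section Aux
open Matrix in
lemma aux_proj_gdIter (m n : ℕ) (φ : Fin n → EuclideanSpace ℝ (Fin m)) (y : Fin n → ℝ)
    (η lam : ℝ) (θ0 : EuclideanSpace ℝ (Fin m)) (t : ℕ) :
    Submodule.orthogonalProjection (Submodule.span ℝ (Set.range φ))ᗮ (gdIter m n φ y η lam θ0 t)
      = ((1 - η * lam) ^ t : ℝ) •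
        Submodule.orthogonalProjection (Submodule.span ℝ (Set.range φ))ᗮ θ0 := by
  set K := Submodule.span ℝ (Set.range φ) with hK
  induction t with
  | zero => simp [gdIter]
  | succ t ih =>
    show Submodule.orthogonalProjection Kᗮ (gdStep m n φ y η lam (gdIter m n φ y η lam θ0 t)) = _
    set θ := gdIter m n φ y η lam θ0 t
    have hS : (∑ i, (⟪θ, φ i⟫ - y i) • φ i) ∈ K := by
      rw [hK]
      exact Submodule.sum_smul_mem _ _ fun i _ => Submodule.subset_span ⟨i, rfl⟩
    have hS0 : Submodule.orthogonalProjection Kᗮ (∑ i, (⟪θ, φ i⟫ - y i) • φ i) = 0 :=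
      Submodule.orthogonalProjectionOnto_apply_of_mem_orthogonal
        (K.le_orthogonal_orthogonal hS)
    unfold gdStep
    simp only [map_sub, map_add, _root_.map_smul, hS0, smul_zero, zero_add, ih]
    rw [pow_succ]
    module

lemma aux_quad_form_eq (d m : ℕ) (D : Measure (EuclideanSpace ℝ (Fin d)))
    (φmap : EuclideanSpace ℝ (Fin d) → EuclideanSpace ℝ (Fin m))
    (SigmaMat : Matrix (Fin m) (Fin m) ℝ)
    (hSigma : ∀ j k, SigmaMat j k = ∫ x, φmap x j * φmap x k ∂D)
    (hInt : ∀ j k : Fin m, Integrable (fun x => φmap x j * φmap x k) D)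
    (v : EuclideanSpace ℝ (Fin m)) :
    ∫ x, (⟪v, φmap x⟫) ^ 2 ∂D
      = dotProduct (fun j => v j) (SigmaMat.mulVec fun j => v j) := by
  have h1 : ∀ x : EuclideanSpace ℝ (Fin d),
      (⟪v, φmap x⟫) ^ 2 = ∑ j, ∑ k, (v j * v k) * (φmap x j * φmap x k) := by
    intro x
    rw [PiLp.inner_apply]
    simp only [RCLike.inner_apply, conj_trivial, sq, Finset.sum_mul_sum]
    congr 1; ext j; congr 1; ext k; ring
  simp only [h1]
  rw [integral_finset_sum _ fun j _ => integrable_finset_sum _ fun k _ => (hInt j k).const_mul _]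
  rw [dotProduct, Finset.sum_congr rfl]
  intro j _
  rw [integral_finset_sum _ fun k _ => (hInt j k).const_mul _, Matrix.mulVec, dotProduct,
    Finset.mul_sum]
  refine Finset.sum_congr rfl fun k _ => ?_
  rw [MeasureTheory.integral_const_mul, hSigma j k]
  ring

lemma aux_psd_bound (m : ℕ) (SigmaMat : Matrix (Fin m) (Fin m) ℝ)
    (hHerm : SigmaMat.IsHermitian) (lamSigma : ℝ)
    (hSigmaleast : ∀ μ : ℝ, (∃ w : Fin m → ℝ, w ≠ 0 ∧ SigmaMat.mulVec w = μ • w) → lamSigma ≤ μ)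
    (v : Fin m → ℝ) :
    lamSigma * dotProduct v v ≤ dotProduct v (SigmaMat.mulVec v) := by
  set B : Matrix (Fin m) (Fin m) ℝ := SigmaMat - lamSigma • 1 with hBdef
  have hB : B.IsHermitian := by
    unfold Matrix.IsHermitian
    rw [hBdef, Matrix.conjTranspose_sub, hHerm]
    congr 1
    ext j k
    by_cases h : j = k
    · simp [h, Matrix.conjTranspose_apply]
    · simp [Matrix.conjTranspose_apply, Matrix.one_apply, h, Ne.symm h]
  have hBmul : ∀ u : Fin m → ℝ, B.mulVec u = SigmaMat.mulVec u - lamSigma • u := by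
    intro u
    rw [hBdef, Matrix.sub_mulVec, Matrix.smul_mulVec, Matrix.one_mulVec]
  have hpsd : B.PosSemidef := by
    refine hB.posSemidef_iff_eigenvalues_nonneg.mpr fun i => ?_
    have hv := hB.mulVec_eigenvectorBasis i
    have hw : SigmaMat.mulVec ⇑(hB.eigenvectorBasis i) =
        (hB.eigenvalues i + lamSigma) • ⇑(hB.eigenvectorBasis i) := by
      have h2 : SigmaMat.mulVec ⇑(hB.eigenvectorBasis i) - lamSigma • ⇑(hB.eigenvectorBasis i)
          = hB.eigenvalues i • ⇑(hB.eigenvectorBasis i) := by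
        rw [← hv, hBmul]
      rw [add_smul]
      linear_combination (norm := module) h2
    have hne : (⇑(hB.eigenvectorBasis i) : Fin m → ℝ) ≠ 0 := by
      intro h
      apply hB.eigenvectorBasis.orthonormal.ne_zero i
      ext j
      exact congrFun h j
    have := hSigmaleast _ ⟨_, hne, hw⟩
    rw [Pi.zero_apply]
    linarith
  have h0 := hpsd.dotProduct_mulVec_nonneg v
  simp only [star_trivial] at h0
  have : dotProduct v (B.mulVec v) =
      dotProduct v (SigmaMat.mulVec v) - lamSigma * dotProduct v v := by
    rw [hBmul, dotProduct_sub, dotProduct_smul]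
    ring_nf
  rw [this] at h0
  linarith
end Aux

/-- realizable teacher, `0 < ηλ < 1`; for every initialization and `t`,
`‖θ^{(t)} − θ*‖ ≥ (1 − ηλ)^t‖θ_⊥^{(0)}‖ − ‖θ*‖`; consequently, whenever
`(1 − ηλ)^t‖θ_⊥^{(0)}‖ ≥ ‖θ*‖`, the population loss satisfies
`L(θ^{(t)}) ≥ λ_min(Σ)((1 − ηλ)^t‖θ_⊥^{(0)}‖ − ‖θ*‖)²`. -/
theorem distance_and_population_loss_lower_bound (d n m : ℕ) (hn : 1 ≤ n) (hm : 1 ≤ m)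
    (D : Measure (EuclideanSpace ℝ (Fin d))) [IsProbabilityMeasure D]
    (φmap : EuclideanSpace ℝ (Fin d) → EuclideanSpace ℝ (Fin m))
    (hφmeas : Measurable φmap)
    (xs : Fin n → EuclideanSpace ℝ (Fin d))
    (θstar : EuclideanSpace ℝ (Fin m))
    (SigmaMat : Matrix (Fin m) (Fin m) ℝ)
    (hSigma : ∀ j k, SigmaMat j k = ∫ x, φmap x j * φmap x k ∂D)
    (hInt : ∀ j k : Fin m, Integrable (fun x => φmap x j * φmap x k) D)
    (lamSigma : ℝ)
    (hSigmaeig : ∃ w : Fin m → ℝ, w ≠ 0 ∧ SigmaMat.mulVec w = lamSigma • w)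
    (hSigmaleast : ∀ μ : ℝ, (∃ w : Fin m → ℝ, w ≠ 0 ∧ SigmaMat.mulVec w = μ • w) → lamSigma ≤ μ)
    (lam η : ℝ) (hlam : 0 < lam) (hη : 0 < η)
    (hetalam0 : 0 < η * lam) (hetalam1 : η * lam < 1)
    (θ0 : EuclideanSpace ℝ (Fin m)) (t : ℕ) :
    (1 - η * lam) ^ t *
        ‖(Submodule.orthogonalProjection (Submodule.span ℝ (Set.range fun i => φmap (xs i)))ᗮ θ0 :
            EuclideanSpace ℝ (Fin m))‖ - ‖θstar‖ ≤
      ‖gdIter m n (fun i => φmap (xs i)) (fun i => ⟪θstar, φmap (xs i)⟫) η lam θ0 t -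
          θstar‖ ∧
    (‖θstar‖ ≤ (1 - η * lam) ^ t *
        ‖(Submodule.orthogonalProjection (Submodule.span ℝ (Set.range fun i => φmap (xs i)))ᗮ θ0 :
            EuclideanSpace ℝ (Fin m))‖ →
      lamSigma * ((1 - η * lam) ^ t *
          ‖(Submodule.orthogonalProjection
              (Submodule.span ℝ (Set.range fun i => φmap (xs i)))ᗮ θ0 :
              EuclideanSpace ℝ (Fin m))‖ - ‖θstar‖) ^ 2 ≤
        popLoss d m D φmap θstar
          (gdIter m n (fun i => φmap (xs i))
            (fun i => ⟪θstar, φmap (xs i)⟫) η lam θ0 t)) := by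
  set φ : Fin n → EuclideanSpace ℝ (Fin m) := fun i => φmap (xs i) with hφ
  set K := Submodule.span ℝ (Set.range φ) with hK
  set y : Fin n → ℝ := fun i => ⟪θstar, φ i⟫ with hy
  set θt := gdIter m n φ y η lam θ0 t with hθt
  set r := (1 - η * lam) ^ t *
      ‖(Submodule.orthogonalProjection Kᗮ θ0 : EuclideanSpace ℝ (Fin m))‖ with hr
  have hpowpos : (0:ℝ) < (1 - η * lam) ^ t := pow_pos (by linarith) t
  -- Part 1
  have hproj := aux_proj_gdIter m n φ y η lam θ0 t
  have hnorm : ‖(Submodule.orthogonalProjection Kᗮ θt : EuclideanSpace ℝ (Fin m))‖ = r := by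
    rw [hθt, hproj, hr]
    rw [show ((((1 - η * lam) ^ t : ℝ) • Submodule.orthogonalProjection Kᗮ θ0 : Kᗮ) :
        EuclideanSpace ℝ (Fin m)) = ((1 - η * lam) ^ t : ℝ) •
        (Submodule.orthogonalProjection Kᗮ θ0 : EuclideanSpace ℝ (Fin m)) from rfl]
    rw [norm_smul, Real.norm_eq_abs, abs_of_pos hpowpos]
  have hPle : ‖(Submodule.orthogonalProjection Kᗮ θt : EuclideanSpace ℝ (Fin m))‖ ≤ ‖θt‖ := by
    calc ‖(Submodule.orthogonalProjection Kᗮ θt : EuclideanSpace ℝ (Fin m))‖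
        ≤ ‖Submodule.orthogonalProjection Kᗮ‖ * ‖θt‖ := (Submodule.orthogonalProjection Kᗮ).le_opNorm θt
      _ ≤ 1 * ‖θt‖ := by
          exact mul_le_mul_of_nonneg_right (Submodule.orthogonalProjection_norm_le _) (norm_nonneg _)
      _ = ‖θt‖ := one_mul _
  have hpart1 : r - ‖θstar‖ ≤ ‖θt - θstar‖ := by
    have h1 : ‖θt‖ - ‖θstar‖ ≤ ‖θt - θstar‖ := norm_sub_norm_le _ _
    rw [← hnorm]
    linarith
  refine ⟨hpart1, fun hge => ?_⟩
  -- Part 2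
  have hHerm : SigmaMat.IsHermitian := by
    unfold Matrix.IsHermitian
    ext j k
    rw [Matrix.conjTranspose_apply, star_trivial, hSigma, hSigma]
    congr 1
    ext x
    ring
  set δ : EuclideanSpace ℝ (Fin m) := θt - θstar with hδ
  have hquad := aux_quad_form_eq d m D φmap SigmaMat hSigma hInt δ
  have hpsd := aux_psd_bound m SigmaMat hHerm lamSigma hSigmaleast (fun j => δ j)
  have hdot : dotProduct (fun j => δ j) (fun j => δ j) = ‖δ‖ ^ 2 := by
    rw [← real_inner_self_eq_norm_sq, PiLp.inner_apply]
    simp [dotProduct, RCLike.inner_apply, sq]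
  have hlamnn : 0 ≤ lamSigma := by
    obtain ⟨w, hwne, hweig⟩ := hSigmaeig
    have hq := aux_quad_form_eq d m D φmap SigmaMat hSigma hInt ((WithLp.equiv 2 _).symm w)
    have hnn : 0 ≤ dotProduct w (SigmaMat.mulVec w) := by
      rw [show dotProduct w (SigmaMat.mulVec w)
          = dotProduct (fun j => ((WithLp.equiv 2 _).symm w : EuclideanSpace ℝ (Fin m)) j)
            (SigmaMat.mulVec fun j => ((WithLp.equiv 2 _).symm w :
              EuclideanSpace ℝ (Fin m)) j) from rfl, ← hq]
      exact integral_nonneg fun x => sq_nonneg _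
    have hval : dotProduct w (SigmaMat.mulVec w)
        = lamSigma * dotProduct w w := by
      rw [hweig, dotProduct_smul]
      rfl
    have hwpos : 0 < dotProduct w w := by
      obtain ⟨j, hj⟩ := Function.ne_iff.mp hwne
      exact Finset.sum_pos' (fun i _ => mul_self_nonneg _)
        ⟨j, Finset.mem_univ j, mul_self_pos.mpr hj⟩
    nlinarith [hval ▸ hnn]
  have hrle : (r - ‖θstar‖) ^ 2 ≤ ‖δ‖ ^ 2 := by
    have h0 : 0 ≤ r - ‖θstar‖ := sub_nonneg.mpr hge
    exact pow_le_pow_left₀ h0 hpart1 2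
  have : popLoss d m D φmap θstar θt = ∫ x, (⟪δ, φmap x⟫) ^ 2 ∂D := rfl
  rw [this, hquad]
  calc lamSigma * (r - ‖θstar‖) ^ 2
      ≤ lamSigma * ‖δ‖ ^ 2 := mul_le_mul_of_nonneg_left hrle hlamnn
    _ = lamSigma * dotProduct (fun j => δ j) (fun j => δ j) := by rw [hdot]
    _ ≤ _ := hpsd

end
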